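/- Let t > 0 and F(x) = |x| + (x − t)²/(2t). Then for all real numbers a ≤ b ≤ 0, the conditional ratio (∫_{Ta}^{Tb} exp(−F(x)/T) dx) / (∫_{−∞}^0 exp(−F(x)/T) dx) converges, as T → 0⁺, to ∫_a^b 2 e^{2x} dx. In other words, conditionally on the event [X_T(t,t) < 0], the random variable X_T(t,t)/T converges in distribution to −E(2), where E(2) is exponential with rate 2 (density 2e^{−2x} on x > 0). -/

import Mathlib

open Filter MeasureTheory

/-- The one-dimensional objective `F(x) = |x| + (x − y)²/(2t)`. -/
noncomputable def obj1 (y t x : ℝ) : ℝ := |x| + (x - y) ^ 2 / (2 * t)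

lemma my_integral_comp_mul_left_Iic (g : ℝ → ℝ) (a : ℝ) {b : ℝ} (hb : 0 < b) :
    (∫ x in Set.Iic a, g (b * x)) = b⁻¹ • ∫ x in Set.Iic (b * a), g x := by
  have : ∀ c : ℝ, MeasurableSet (Set.Iic c) := fun c => measurableSet_Iic
  rw [← integral_indicator (this a), ← integral_indicator (this (b * a)),
    ← abs_of_pos (inv_pos.mpr hb), ← Measure.integral_comp_mul_left]
  congr
  ext1 x
  rw [← Set.indicator_comp_right, (Set.preimage_const_mul_Iic₀ (b * a) hb :
      HMul.hMul b ⁻¹' Set.Iic (b * a) = Set.Iic (b * a / b)),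
    mul_div_cancel_left₀ _ hb.ne']
  rfl

lemma key_eq (t : ℝ) (ht : 0 < t) (T : ℝ) (hT : 0 < T) (u : ℝ) (hu : u ≤ 0) :
    Real.exp (-(obj1 t t (T * u)) / T) =
      Real.exp (-t / (2 * T)) * Real.exp (2 * u - T * u ^ 2 / (2 * t)) := by
  rw [← Real.exp_add]
  congr 1
  have hx : |T * u| = -(T * u) := abs_of_nonpos (by nlinarith)
  rw [obj1, hx]
  field_simp
  ring

lemma tendsto_pt (t : ℝ) (ht : 0 < t) (u : ℝ) :
    Tendsto (fun T : ℝ => Real.exp (2 * u - T * u ^ 2 / (2 * t)))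
      (nhdsWithin 0 (Set.Ioi 0)) (nhds (Real.exp (2 * u))) := by
  have h : Continuous fun T : ℝ => Real.exp (2 * u - T * u ^ 2 / (2 * t)) := by
    continuity
  have h2 : Tendsto (fun T : ℝ => Real.exp (2 * u - T * u ^ 2 / (2 * t)))
      (nhdsWithin 0 (Set.Ioi 0)) (nhds (Real.exp (2 * u - 0 * u ^ 2 / (2 * t)))) :=
    (h.tendsto 0).mono_left nhdsWithin_le_nhds
  simpa using h2

/-- For `y = t`, conditionally on `[X_T < 0]`, `X_T/T` converges in distribution to
`−E(2)` where `E(2)` is exponential with rate `2`. -/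
theorem stmt10 (t : ℝ) (ht : 0 < t) (a b : ℝ) (hab : a ≤ b) (hb : b ≤ 0) :
    Tendsto
      (fun T : ℝ =>
        (∫ x in (T * a)..(T * b), Real.exp (-(obj1 t t x) / T)) /
          ∫ x in Set.Iic (0 : ℝ), Real.exp (-(obj1 t t x) / T))
      (nhdsWithin 0 (Set.Ioi 0))
      (nhds (∫ x in a..b, 2 * Real.exp (2 * x))) := by
  set N : ℝ → ℝ := fun T => ∫ u in a..b, Real.exp (2 * u - T * u ^ 2 / (2 * t)) with hN
  set D : ℝ → ℝ := fun T => ∫ u in Set.Iic (0 : ℝ), Real.exp (2 * u - T * u ^ 2 / (2 * t))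
    with hD
  -- bound integrability on Iic 0
  have hbd : IntegrableOn (fun u : ℝ => Real.exp (2 * u)) (Set.Iic (0 : ℝ)) := by
    refine Integrable.mono' (integrableOn_exp_Iic 0)
      (Continuous.aestronglyMeasurable (by continuity)).restrict ?_
    rw [ae_restrict_iff' measurableSet_Iic]
    filter_upwards with u hu
    rw [Real.norm_eq_abs, Real.abs_exp]
    exact Real.exp_le_exp.2 (by linarith [Set.mem_Iic.mp hu])
  have hDval : (∫ u in Set.Iic (0 : ℝ), Real.exp (2 * u)) = 1 / 2 := by
    have := my_integral_comp_mul_left_Iic Real.exp 0 (b := 2) (by norm_num)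
    simp only [mul_zero] at this
    rw [this, integral_exp_Iic_zero]
    norm_num
  -- convergence of N
  have hNlim : Tendsto N (nhdsWithin 0 (Set.Ioi 0))
      (nhds (∫ u in a..b, Real.exp (2 * u))) := by
    apply intervalIntegral.tendsto_integral_filter_of_dominated_convergence
      (fun u => Real.exp (2 * u))
    · filter_upwards with T
      exact (Continuous.aestronglyMeasurable (by continuity)).restrict
    · filter_upwards [self_mem_nhdsWithin] with T hT
      have hT' : (0:ℝ) < T := hT
      filter_upwards with u _
      rw [Real.norm_eq_abs, Real.abs_exp]
      apply Real.exp_le_exp.2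
      have : 0 ≤ T * u ^ 2 / (2 * t) := by positivity
      linarith
    · apply Continuous.intervalIntegrable; continuity
    · filter_upwards with u _
      exact tendsto_pt t ht u
  -- convergence of D
  have hDlim : Tendsto D (nhdsWithin 0 (Set.Ioi 0))
      (nhds (∫ u in Set.Iic (0 : ℝ), Real.exp (2 * u))) := by
    apply MeasureTheory.tendsto_integral_filter_of_dominated_convergence
      (fun u => Real.exp (2 * u))
    · filter_upwards with T
      exact (Continuous.aestronglyMeasurable (by continuity)).restrict
    · filter_upwards [self_mem_nhdsWithin] with T hT
      have hT' : (0:ℝ) < T := hT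
      filter_upwards with u
      rw [Real.norm_eq_abs, Real.abs_exp]
      apply Real.exp_le_exp.2
      have : 0 ≤ T * u ^ 2 / (2 * t) := by positivity
      linarith
    · exact hbd
    · filter_upwards with u
      exact tendsto_pt t ht u
  have hratio : Tendsto (fun T => N T / D T) (nhdsWithin 0 (Set.Ioi 0))
      (nhds ((∫ u in a..b, Real.exp (2 * u)) / (1 / 2))) := by
    refine Tendsto.div hNlim ?_ (by norm_num)
    rwa [hDval] at hDlim
  have hval : (∫ u in a..b, Real.exp (2 * u)) / (1 / 2)
      = ∫ x in a..b, 2 * Real.exp (2 * x) := by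
    rw [intervalIntegral.integral_const_mul]
    ring
  rw [← hval]
  apply hratio.congr'
  filter_upwards [self_mem_nhdsWithin] with T hT
  have hT : (0 : ℝ) < T := hT
  -- numerator identity
  have hnum : (∫ x in (T * a)..(T * b), Real.exp (-(obj1 t t x) / T))
      = (T * Real.exp (-t / (2 * T))) * N T := by
    have h := intervalIntegral.integral_comp_mul_left (a := a) (b := b)
      (f := fun x => Real.exp (-(obj1 t t x) / T)) (c := T) hT.ne'
    rw [smul_eq_mul] at h
    have h2 : (∫ u in a..b, Real.exp (-(obj1 t t (T * u)) / T))
        = Real.exp (-t / (2 * T)) * N T := by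
      rw [hN, ← intervalIntegral.integral_const_mul]
      apply intervalIntegral.integral_congr
      intro u hu
      rw [Set.uIcc_of_le hab] at hu
      exact key_eq t ht T hT u (le_trans hu.2 hb)
    rw [h2] at h
    field_simp at h
    simp only [neg_div] at h ⊢
    linarith [h]
  -- denominator identity
  have hden : (∫ x in Set.Iic (0 : ℝ), Real.exp (-(obj1 t t x) / T))
      = (T * Real.exp (-t / (2 * T))) * D T := by
    have h := my_integral_comp_mul_left_Iic
      (fun x => Real.exp (-(obj1 t t x) / T)) 0 (b := T) hT
    simp only [mul_zero, smul_eq_mul] at h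
    have h2 : (∫ u in Set.Iic (0 : ℝ), Real.exp (-(obj1 t t (T * u)) / T))
        = Real.exp (-t / (2 * T)) * D T := by
      rw [hD, ← integral_const_mul]
      apply setIntegral_congr_fun measurableSet_Iic
      intro u hu
      exact key_eq t ht T hT u hu
    rw [h2] at h
    have hT' : T ≠ 0 := hT.ne'
    field_simp at h ⊢
    linarith [h]
  rw [hnum, hden, mul_div_mul_left _ _ (by positivity : T * Real.exp (-t / (2 * T)) ≠ 0)]
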